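/- arXiv:1612.05521 — 6 statements merged into one kernel-verified Lean document; each statement's English description precedes it below -/
import Mathlib

section
/- Let (X, σ) be a metric-like space, R a binary relation on X, and f : X → X. Assume: (a) there exists Y ⊆ X with f(X) ⊆ Y such that (Y, σ) is R-complete; (b) there exists x₀ ∈ X with (x₀, f x₀) ∈ R; (c) R is f-closed; (d) the restriction R|_Y is σ-self-closed; (e) there exists k ∈ [0,1) such that σ(fx, fy) ≤ k·σ(x, y) for all x, y ∈ X with (x, y) ∈ R. Then f has a fixed point. -/
open Filter Topology MeasureTheory

/-- A metric-like (dislocated) function on `X`: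
nonnegativity, (σ1) `σ x y = 0 → x = y`, (σ2) symmetry, (σ3) triangle inequality. -/
def MetricLike {X : Type*} (σ : X → X → ℝ) : Prop :=
  (∀ x y, 0 ≤ σ x y) ∧ (∀ x y, σ x y = 0 → x = y) ∧
    (∀ x y, σ x y = σ y x) ∧ (∀ x y z, σ x y ≤ σ x z + σ z y)

/-- Convergence of a sequence w.r.t. the topology `τ_σ`:
`lim_n σ (u n) x = σ x x`. -/
def ConvergesTo {X : Type*} (σ : X → X → ℝ) (u : ℕ → X) (x : X) : Prop :=
  Tendsto (fun n => σ (u n) x) atTop (𝓝 (σ x x))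

/-- A sequence is Cauchy if `lim_{n,m} σ (u n) (u m)` exists and is finite. -/
def IsCauchyML {X : Type*} (σ : X → X → ℝ) (u : ℕ → X) : Prop :=
  ∃ L : ℝ, Tendsto (fun q : ℕ × ℕ => σ (u q.1) (u q.2)) atTop (𝓝 L)

/-- A sequence is `R`-preserving if consecutive terms are `R`-related. -/
def RPreserving {X : Type*} (R : X → X → Prop) (u : ℕ → X) : Prop :=
  ∀ n, R (u n) (u (n + 1))

/-- `(Y, σ)` is `R`-complete: every `R`-preserving Cauchy sequence in `Y` has a
limit `x ∈ Y` with `lim_{n,m} σ (u n) (u m) = σ x x = lim_n σ (u n) x`. -/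
def RCompleteOn {X : Type*} (σ : X → X → ℝ) (R : X → X → Prop) (Y : Set X) : Prop :=
  ∀ u : ℕ → X, (∀ n, u n ∈ Y) → RPreserving R u → IsCauchyML σ u →
    ∃ x ∈ Y, Tendsto (fun q : ℕ × ℕ => σ (u q.1) (u q.2)) atTop (𝓝 (σ x x)) ∧
      ConvergesTo σ u x

/-- `(Y, σ)` is complete: every Cauchy sequence in `Y` has a limit `x ∈ Y` with
`lim_{n,m} σ (u n) (u m) = σ x x = lim_n σ (u n) x`. -/
def CompleteOn {X : Type*} (σ : X → X → ℝ) (Y : Set X) : Prop :=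
  ∀ u : ℕ → X, (∀ n, u n ∈ Y) → IsCauchyML σ u →
    ∃ x ∈ Y, Tendsto (fun q : ℕ × ℕ => σ (u q.1) (u q.2)) atTop (𝓝 (σ x x)) ∧
      ConvergesTo σ u x

/-- `R` is `f`-closed: `R x y → R (f x) (f y)`. -/
def FClosed {X : Type*} (R : X → X → Prop) (f : X → X) : Prop :=
  ∀ x y, R x y → R (f x) (f y)

/-- `f` is `R`-continuous-like: it preserves limits of `R`-preserving sequences. -/
def RContinuousLike {X : Type*} (σ : X → X → ℝ) (R : X → X → Prop) (f : X → X) : Prop :=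
  ∀ (u : ℕ → X) (x : X), RPreserving R u → ConvergesTo σ u x →
    ConvergesTo σ (fun n => f (u n)) (f x)

/-- `f` is continuous-like: it preserves limits of sequences w.r.t. `τ_σ`. -/
def ContinuousLike {X : Type*} (σ : X → X → ℝ) (f : X → X) : Prop :=
  ∀ (u : ℕ → X) (x : X), ConvergesTo σ u x → ConvergesTo σ (fun n => f (u n)) (f x)

/-- `R` is `σ`-self-closed: every `R`-preserving sequence converging to `x` has a
subsequence whose terms are `R`-comparable with `x`. -/
def SelfClosed {X : Type*} (σ : X → X → ℝ) (R : X → X → Prop) : Prop :=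
  ∀ (u : ℕ → X) (x : X), RPreserving R u → ConvergesTo σ u x →
    ∃ φ : ℕ → ℕ, StrictMono φ ∧ ∀ k, R (u (φ k)) x ∨ R x (u (φ k))

/-- The restriction of the relation `R` to a subset `Y`. -/
def Restrict {X : Type*} (R : X → X → Prop) (Y : Set X) : X → X → Prop :=
  fun x y => R x y ∧ x ∈ Y ∧ y ∈ Y

/-- There is a path of some (positive, finite) length from `a` to `b` in `R^s`:
a finite sequence `z 0 = a, …, z l = b` with `[z i, z (i+1)] ∈ R` for `i < l`. -/
def PathIn {X : Type*} (R : X → X → Prop) (a b : X) : Prop :=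
  ∃ (l : ℕ) (z : ℕ → X), 0 < l ∧ z 0 = a ∧ z l = b ∧
    ∀ i < l, R (z i) (z (i + 1)) ∨ R (z (i + 1)) (z i)

/-- Relation-theoretic contraction principle in metric-like spaces:
existence of a fixed point when `R|_Y` is `σ`-self-closed. -/
theorem fixedPoint_of_selfClosed {X : Type*} (σ : X → X → ℝ) (R : X → X → Prop)
    (f : X → X) (hML : MetricLike σ)
    (Y : Set X) (hfY : Set.range f ⊆ Y) (ha : RCompleteOn σ R Y)
    (x₀ : X) (hb : R x₀ (f x₀))
    (hc : FClosed R f)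
    (hd : SelfClosed σ (Restrict R Y))
    (k : ℝ) (hk0 : 0 ≤ k) (hk1 : k < 1)
    (he : ∀ x y, R x y → σ (f x) (f y) ≤ k * σ x y) :
    ∃ x, f x = x := by
  obtain ⟨hnn, h1, h2, h3⟩ := hML
  set u : ℕ → X := fun n => f (f^[n] x₀) with hu
  have hu_succ : ∀ n, u (n + 1) = f (u n) := by
    intro n
    simp only [hu, Function.iterate_succ_apply']
  have huY : ∀ n, u n ∈ Y := fun n => hfY ⟨f^[n] x₀, rfl⟩
  have hR : ∀ n, R (u n) (u (n + 1)) := by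
    intro n
    induction n with
    | zero => simpa [hu, hu_succ] using hc _ _ hb
    | succ m ih => rw [hu_succ, hu_succ (m+1)]; exact hc _ _ ih
  set C : ℝ := σ (u 0) (u 1) with hC
  have hC0 : 0 ≤ C := hnn _ _
  have hstep : ∀ n, σ (u n) (u (n + 1)) ≤ k ^ n * C := by
    intro n
    induction n with
    | zero => simp; exact le_of_eq hC.symm
    | succ m ih =>
      rw [hu_succ m, hu_succ (m+1)]
      calc σ (f (u m)) (f (u (m+1))) ≤ k * σ (u m) (u (m+1)) := he _ _ (hR m)
        _ ≤ k * (k ^ m * C) := by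
            exact mul_le_mul_of_nonneg_left ih hk0
        _ = k ^ (m+1) * C := by ring
  set D : ℝ := 2 * C / (1 - k) with hD
  have hk1' : 0 < 1 - k := by linarith
  have hD0 : 0 ≤ D := by positivity
  have hDC : (1 - k) * D = 2 * C := by
    rw [hD]; field_simp
  have hkey : ∀ p n, σ (u n) (u (n + p)) ≤ k ^ n * D := by
    intro p
    induction p with
    | zero =>
      intro n
      have h := hstep n
      have hself : σ (u n) (u n) ≤ 2 * σ (u n) (u (n + 1)) := by
        have := h3 (u n) (u n) (u (n+1))
        rw [h2 (u (n+1)) (u n)] at this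
        linarith
      have : σ (u n) (u n) ≤ 2 * (k ^ n * C) := by nlinarith
      have hle : 2 * (k ^ n * C) ≤ k ^ n * D := by
        nlinarith [pow_nonneg hk0 n, mul_nonneg (pow_nonneg hk0 n) (mul_nonneg hk0 hD0)]
      simpa using this.trans hle
    | succ q ih =>
      intro n
      have htri : σ (u n) (u (n + (q+1))) ≤ σ (u n) (u (n+1)) + σ (u (n+1)) (u (n+1+q)) := by
        have := h3 (u n) (u (n + (q+1))) (u (n+1))
        have he' : n + (q + 1) = n + 1 + q := by ring
        rw [he'] at this ⊢
        exact this
      have h1' := hstep n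
      have h2' := ih (n + 1)
      have hk' : k ^ (n+1) * D = k * (k ^ n * D) := by ring
      have : σ (u n) (u (n + (q+1))) ≤ k ^ n * C + k ^ (n+1) * D := by
        calc σ (u n) (u (n + (q+1))) ≤ σ (u n) (u (n+1)) + σ (u (n+1)) (u (n+1+q)) := htri
          _ ≤ k ^ n * C + k ^ (n+1) * D := add_le_add h1' h2'
      refine this.trans ?_
      have hpow : (0:ℝ) ≤ k ^ n := pow_nonneg hk0 n
      nlinarith [hDC, mul_nonneg hpow hC0]
  have hbound : ∀ n m, σ (u n) (u m) ≤ k ^ (min n m) * D := by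
    intro n m
    rcases le_total n m with h | h
    · obtain ⟨p, rfl⟩ := Nat.exists_eq_add_of_le h
      simpa [min_eq_left (Nat.le_add_right n p)] using hkey p n
    · obtain ⟨p, rfl⟩ := Nat.exists_eq_add_of_le h
      rw [h2]
      simpa [min_eq_right (Nat.le_add_right m p)] using hkey p m
  have hmin : Tendsto (fun q : ℕ × ℕ => min q.1 q.2) atTop atTop := by
    rw [tendsto_atTop]
    intro b
    refine eventually_atTop.2 ⟨(b, b), fun q hq => ?_⟩
    exact le_min hq.1 hq.2
  have hg : Tendsto (fun q : ℕ × ℕ => k ^ (min q.1 q.2) * D) atTop (𝓝 0) := by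
    have := (tendsto_pow_atTop_nhds_zero_of_lt_one hk0 hk1).comp hmin
    have h0 : (0:ℝ) = 0 * D := by ring
    rw [h0]
    exact this.mul_const D
  have hT0 : Tendsto (fun q : ℕ × ℕ => σ (u q.1) (u q.2)) atTop (𝓝 0) :=
    squeeze_zero (fun q => hnn _ _) (fun q => hbound q.1 q.2) hg
  obtain ⟨x, hxY, hx1, hx2⟩ := ha u huY hR ⟨0, hT0⟩
  have hσxx : σ x x = 0 := tendsto_nhds_unique hx1 hT0
  have hσn : Tendsto (fun n => σ (u n) x) atTop (𝓝 0) := by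
    rw [← hσxx]; exact hx2
  have hR' : RPreserving (Restrict R Y) u := fun n => ⟨hR n, huY n, huY (n+1)⟩
  have hconv : ConvergesTo σ u x := hx2
  obtain ⟨φ, hφ, hφR⟩ := hd u x hR' hconv
  have hcontract : ∀ j, σ (u (φ j + 1)) (f x) ≤ k * σ (u (φ j)) x := by
    intro j
    rw [hu_succ]
    rcases hφR j with ⟨h, _, _⟩ | ⟨h, _, _⟩
    · exact he _ _ h
    · rw [h2, h2 (u (φ j)) x]
      exact he _ _ h
  have hφt : Tendsto φ atTop atTop := hφ.tendsto_atTop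
  have hφt1 : Tendsto (fun j => φ j + 1) atTop atTop :=
    tendsto_atTop_mono (fun j => Nat.le_succ (φ j)) hφt
  have hlim : Tendsto (fun j => σ (u (φ j + 1)) x + k * σ (u (φ j)) x) atTop (𝓝 0) := by
    have t1 : Tendsto (fun j => σ (u (φ j + 1)) x) atTop (𝓝 0) := hσn.comp hφt1
    have t2 : Tendsto (fun j => k * σ (u (φ j)) x) atTop (𝓝 0) := by
      have := (hσn.comp hφt).const_mul k
      simpa using this
    simpa using t1.add t2
  have hfx : σ x (f x) ≤ 0 := by
    refine ge_of_tendsto' hlim fun j => ?_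
    calc σ x (f x) ≤ σ x (u (φ j + 1)) + σ (u (φ j + 1)) (f x) := h3 _ _ _
      _ ≤ σ (u (φ j + 1)) x + k * σ (u (φ j)) x := by
          rw [h2 x (u (φ j + 1))]
          exact add_le_add le_rfl (hcontract j)
  have : σ x (f x) = 0 := le_antisymm hfx (hnn _ _)
  exact ⟨x, (h1 _ _ this).symm⟩
end

section
/- Let (X, σ) be a metric-like space and f : X → X. Suppose there exists Y with f(X) ⊆ Y ⊆ X such that (Y, σ) is complete (every Cauchy sequence in Y has a limit y ∈ Y with lim_{n,m→∞} σ(x_n, x_m) = σ(y,y) = lim_{n→∞} σ(x_n, y)), and there exists k ∈ [0,1) such that σ(fx, fy) ≤ k·σ(x, y) for all x, y ∈ X. Then f has a unique fixed point. -/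
open Filter Topology MeasureTheory

/-- Corollary 4: improved Banach contraction principle in metric-like spaces
(completeness only needed on a subset `Y ⊇ f(X)`). -/
theorem banach_metricLike {X : Type*} [Nonempty X] (σ : X → X → ℝ) (f : X → X)
    (hML : MetricLike σ)
    (Y : Set X) (hfY : Set.range f ⊆ Y) (ha : CompleteOn σ Y)
    (k : ℝ) (hk0 : 0 ≤ k) (hk1 : k < 1)
    (he : ∀ x y, σ (f x) (f y) ≤ k * σ x y) :
    ∃! x, f x = x := by
  obtain ⟨hnn, hsep, hsym, htri⟩ := hML
  obtain ⟨x0⟩ := ‹Nonempty X›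
  set d := σ x0 (f x0) with hd
  have hk1' : (0:ℝ) < 1 - k := by linarith
  have hd0 : 0 ≤ d := hnn _ _
  set C := 2 * d / (1 - k) with hC
  have hC0 : 0 ≤ C := by positivity
  have hCk : d + k * C ≤ C := by
    have : C * (1 - k) = 2 * d := by rw [hC]; field_simp [ne_of_gt hk1']
    nlinarith
  have hiter : ∀ n x y, σ (f^[n] x) (f^[n] y) ≤ k ^ n * σ x y := by
    intro n
    induction n with
    | zero => intro x y; simp
    | succ n ih =>
      intro x y
      rw [Function.iterate_succ_apply, Function.iterate_succ_apply]
      calc σ (f^[n] (f x)) (f^[n] (f y)) ≤ k ^ n * σ (f x) (f y) := ih _ _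
        _ ≤ k ^ n * (k * σ x y) :=
            mul_le_mul_of_nonneg_left (he x y) (pow_nonneg hk0 n)
        _ = k ^ (n + 1) * σ x y := by ring
  have hbound0 : ∀ m, σ x0 (f^[m] x0) ≤ C := by
    intro m
    induction m with
    | zero =>
      simp only [Function.iterate_zero_apply]
      have h1 : σ x0 x0 ≤ 2 * d := by
        have h2 := htri x0 x0 (f x0)
        have h3 := hsym (f x0) x0
        linarith
      have hCe : C * (1 - k) = 2 * d := by rw [hC]; field_simp [ne_of_gt hk1']
      nlinarith [mul_nonneg hk0 hC0]
    | succ m ih =>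
      have h3 : σ (f x0) (f^[m + 1] x0) ≤ k * σ x0 (f^[m] x0) := by
        rw [Function.iterate_succ_apply']
        exact he _ _
      have h2 := htri x0 (f^[m + 1] x0) (f x0)
      have h4 : k * σ x0 (f^[m] x0) ≤ k * C := mul_le_mul_of_nonneg_left ih hk0
      linarith
  set u : ℕ → X := fun n => f^[n + 1] x0 with hu
  have hmem : ∀ n, u n ∈ Y := by
    intro n
    apply hfY
    exact ⟨f^[n] x0, (Function.iterate_succ_apply' f n x0).symm⟩
  have hbnd : ∀ n m, n ≤ m → σ (u n) (u m) ≤ k ^ (n + 1) * C := by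
    intro n m hnm
    have hum : u m = f^[n + 1] (f^[m - n] x0) := by
      rw [hu]
      simp only
      rw [← Function.iterate_add_apply]
      congr 1
      omega
    calc σ (u n) (u m) = σ (f^[n+1] x0) (f^[n+1] (f^[m-n] x0)) := by rw [hum]
      _ ≤ k ^ (n + 1) * σ x0 (f^[m - n] x0) := hiter _ _ _
      _ ≤ k ^ (n + 1) * C := mul_le_mul_of_nonneg_left (hbound0 _) (pow_nonneg hk0 _)
  have hbnd' : ∀ n m, σ (u n) (u m) ≤ k ^ (min n m + 1) * C := by
    intro n m
    rcases le_total n m with h | h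
    · rw [min_eq_left h]; exact hbnd n m h
    · rw [min_eq_right h, hsym]; exact hbnd m n h
  have hmin : Tendsto (fun q : ℕ × ℕ => min q.1 q.2) atTop atTop := by
    rw [tendsto_atTop]
    intro b
    filter_upwards [Filter.eventually_ge_atTop ((b, b) : ℕ × ℕ)] with q hq
    exact le_min hq.1 hq.2
  have hgeo : Tendsto (fun n : ℕ => k ^ (n + 1) * C) atTop (𝓝 0) := by
    have h1 : Tendsto (fun n : ℕ => k ^ n) atTop (𝓝 0) :=
      tendsto_pow_atTop_nhds_zero_of_lt_one hk0 hk1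
    have h2 : Tendsto (fun n : ℕ => k ^ n * C) atTop (𝓝 (0 * C)) := h1.mul_const C
    rw [zero_mul] at h2
    exact h2.comp (tendsto_add_atTop_nat 1)
  have hcz : Tendsto (fun q : ℕ × ℕ => σ (u q.1) (u q.2)) atTop (𝓝 0) :=
    squeeze_zero (fun q => hnn _ _) (fun q => hbnd' q.1 q.2) (hgeo.comp hmin)
  obtain ⟨x, hxY, hlim1, hlim2⟩ := ha u hmem ⟨0, hcz⟩
  have hxx : σ x x = 0 := tendsto_nhds_unique hlim1 hcz
  have hconv : Tendsto (fun n => σ (u n) x) atTop (𝓝 0) := by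
    have := hlim2
    rwa [ConvergesTo, hxx] at this
  have hfix : f x = x := by
    have hseq : Tendsto (fun n => k * σ (u n) x + σ (u (n + 1)) x) atTop (𝓝 0) := by
      have h1 := (hconv.const_mul k).add (hconv.comp (tendsto_add_atTop_nat 1))
      simpa using h1
    have hge : ∀ n, σ (f x) x ≤ k * σ (u n) x + σ (u (n + 1)) x := by
      intro n
      have hfu : u (n + 1) = f (u n) := Function.iterate_succ_apply' f (n + 1) x0
      have h1 := htri (f x) x (u (n + 1))
      have h2 : σ (f x) (u (n + 1)) ≤ k * σ (u n) x := by
        rw [hfu, hsym (u n) x]; exact he _ _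
      linarith
    have hle : σ (f x) x ≤ 0 := ge_of_tendsto' hseq hge
    exact hsep _ _ (le_antisymm hle (hnn _ _))
  refine ⟨x, hfix, fun y hy => ?_⟩
  have h1 : σ y x ≤ k * σ y x := by
    have := he y x
    rwa [hy, hfix] at this
  have hyx : σ y x = 0 := by nlinarith [hnn y x]
  exact hsep _ _ hyx
end

section
/- Let (X, σ) be a metric-like space and f : X → X. Suppose there exists Y with f(X) ⊆ Y ⊆ X such that (Y, σ) is complete (every Cauchy sequence in Y has a limit y ∈ Y with lim_{n,m→∞} σ(x_n, x_m) = σ(y,y) = lim_{n→∞} σ(x_n, y)), and there exist k ∈ [0,1) and a function ρ : [0,∞) → [0,∞) that is Lebesgue-integrable on each compact subset of [0,∞) with ∫₀^ε ρ(t) dt > 0 for all ε > 0, such that ∫₀^{σ(fx,fy)} ρ(t) dt ≤ k·∫₀^{σ(x,y)} ρ(t) dt for all x, y ∈ X. Then f has a unique fixed point. -/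
open Filter Topology MeasureTheory

/-- Corollary 5: Branciari-type integral contraction principle in metric-like
spaces (completeness only needed on a subset `Y ⊇ f(X)`). -/
theorem banach_integralType_metricLike {X : Type*} [Nonempty X] (σ : X → X → ℝ)
    (f : X → X) (hML : MetricLike σ)
    (Y : Set X) (hfY : Set.range f ⊆ Y) (ha : CompleteOn σ Y)
    (k : ℝ) (hk0 : 0 ≤ k) (hk1 : k < 1)
    (ρ : ℝ → ℝ) (hρ0 : ∀ t ∈ Set.Ici (0 : ℝ), 0 ≤ ρ t)
    (hρint : ∀ K : Set ℝ, K ⊆ Set.Ici (0 : ℝ) → IsCompact K → IntegrableOn ρ K)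
    (hρpos : ∀ ε : ℝ, 0 < ε → 0 < ∫ t in Set.Icc (0 : ℝ) ε, ρ t)
    (he : ∀ x y : X,
      (∫ t in Set.Icc (0 : ℝ) (σ (f x) (f y)), ρ t) ≤
        k * ∫ t in Set.Icc (0 : ℝ) (σ x y), ρ t) :
    ∃! x, f x = x := by
  classical
  obtain ⟨hσ0, hσ1, hσ2, hσ3⟩ := hML
  set F : ℝ → ℝ := fun a => ∫ t in Set.Icc (0:ℝ) a, ρ t with hFdef
  -- basic properties of F
  have hFnn : ∀ a, 0 ≤ F a := fun a =>
    MeasureTheory.setIntegral_nonneg measurableSet_Icc (fun t ht => hρ0 t ht.1)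
  have hFmono : ∀ a b : ℝ, a ≤ b → F a ≤ F b := by
    intro a b hab
    rcases lt_or_ge b 0 with hb | hb
    · have ha' : a < 0 := lt_of_le_of_lt hab hb
      simp [hFdef, Set.Icc_eq_empty_of_lt ha', Set.Icc_eq_empty_of_lt hb]
    · refine MeasureTheory.setIntegral_mono_set
        (hρint _ Set.Icc_subset_Ici_self isCompact_Icc)
        (MeasureTheory.ae_restrict_of_forall_mem measurableSet_Icc fun t ht => hρ0 t ht.1)
        (HasSubset.Subset.eventuallyLE (Set.Icc_subset_Icc_right hab))
  have hFpos : ∀ ε : ℝ, 0 < ε → 0 < F ε := hρpos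
  have hFlt : ∀ a ε : ℝ, F a < F ε → a < ε := by
    intro a ε h
    by_contra hc
    exact absurd (hFmono _ _ (not_lt.1 hc)) (not_le.2 h)
  have hF0 : F 0 = 0 := by
    have : (MeasureTheory.volume : MeasureTheory.Measure ℝ) (Set.Icc (0:ℝ) 0) = 0 := by
      simp [Set.Icc_self]
    simp [hFdef, Set.Icc_self]
  -- continuity of F along nonnegative sequences
  have hFcont : ∀ c : ℝ, 0 ≤ c → ∀ s : ℕ → ℝ, (∀ n, 0 ≤ s n) →
      Filter.Tendsto s atTop (𝓝 c) →
      Filter.Tendsto (fun n => F (s n)) atTop (𝓝 (F c)) := by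
    intro c hc s hs0 hsc
    have hint : MeasureTheory.IntegrableOn ρ (Set.Icc 0 (c+1)) :=
      hρint _ Set.Icc_subset_Ici_self isCompact_Icc
    have hcont := intervalIntegral.continuousOn_primitive_Icc hint
    have hcw : ContinuousWithinAt F (Set.Icc 0 (c+1)) c := hcont c ⟨hc, by linarith⟩
    have hmem : ∀ᶠ n in atTop, s n ∈ Set.Icc (0:ℝ) (c+1) := by
      filter_upwards [hsc.eventually (gt_mem_nhds (show c < c+1 by linarith))] with n hn
      exact ⟨hs0 n, le_of_lt hn⟩
    exact hcw.tendsto.comp (tendsto_nhdsWithin_iff.2 ⟨hsc, hmem⟩)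
  -- if F (s n) → 0 and s n ≥ 0 then s n → 0
  have hsmall : ∀ s : ℕ → ℝ, (∀ n, 0 ≤ s n) →
      Filter.Tendsto (fun n => F (s n)) atTop (𝓝 0) →
      Filter.Tendsto s atTop (𝓝 0) := by
    intro s hs0 hFs
    refine Metric.tendsto_atTop.2 fun ε hε => ?_
    obtain ⟨N, hN⟩ := Filter.eventually_atTop.1
      (hFs.eventually (gt_mem_nhds (hFpos ε hε)))
    refine ⟨N, fun n hn => ?_⟩
    have := hFlt _ _ (hN n hn)
    rw [Real.dist_eq, sub_zero, abs_of_nonneg (hs0 n)]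
    exact this
  -- the iterated contraction estimate
  have hiter : ∀ (n : ℕ) (x y : X), F (σ (f^[n] x) (f^[n] y)) ≤ k ^ n * F (σ x y) := by
    intro n
    induction n with
    | zero => intro x y; simp
    | succ n ih =>
      intro x y
      rw [Function.iterate_succ_apply, Function.iterate_succ_apply]
      calc F (σ (f^[n] (f x)) (f^[n] (f y))) ≤ k ^ n * F (σ (f x) (f y)) := ih _ _
        _ ≤ k ^ n * (k * F (σ x y)) :=
            mul_le_mul_of_nonneg_left (he x y) (pow_nonneg hk0 n)
        _ = k ^ (n+1) * F (σ x y) := by ring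
  -- the orbit
  obtain ⟨z⟩ := ‹Nonempty X›
  set u : ℕ → X := fun n => f^[n] (f z) with hudef
  have huY : ∀ n, u n ∈ Y := by
    intro n
    cases n with
    | zero => exact hfY ⟨z, rfl⟩
    | succ n =>
      have : u (n+1) = f (u n) := by
        simp only [hudef, Function.iterate_succ_apply']
      rw [this]; exact hfY ⟨u n, rfl⟩
  have husucc : ∀ n, u (n+1) = f (u n) := by
    intro n; simp only [hudef, Function.iterate_succ_apply']
  set d : ℕ → ℝ := fun n => σ (u n) (u (n+1)) with hddef
  have hd0 : ∀ n, 0 ≤ d n := fun n => hσ0 _ _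
  have hdF : ∀ n, F (d n) ≤ k ^ n * F (d 0) := by
    intro n
    have h1 : u n = f^[n] (u 0) := by simp [hudef]
    have h2 : u (n+1) = f^[n] (u 1) := by
      simp [hudef, Function.iterate_succ_apply]
    have := hiter n (u 0) (u 1)
    rw [← h1, ← h2] at this
    exact this
  have hdtend : Filter.Tendsto d atTop (𝓝 0) := by
    apply hsmall d hd0
    have hgeom : Filter.Tendsto (fun n : ℕ => k ^ n * F (d 0)) atTop (𝓝 0) := by
      simpa using (tendsto_pow_atTop_nhds_zero_of_lt_one hk0 hk1).mul_const (F (d 0))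
    exact squeeze_zero (fun n => hFnn _) hdF hgeom
  -- the Cauchy property
  have hself : ∀ x' y' : X, σ x' x' ≤ 2 * σ x' y' := by
    intro x' y'
    have := hσ3 x' x' y'
    rw [hσ2 x' y'] at this
    linarith [hσ3 x' x' y', hσ2 y' x']
  have hcauchy : Filter.Tendsto (fun q : ℕ × ℕ => σ (u q.1) (u q.2)) atTop (𝓝 0) := by
    have key : ∀ ε > (0:ℝ), ∃ N, ∀ n ≥ N, ∀ m ≥ N, σ (u n) (u m) < ε := by
      by_contra hH
      push_neg at hH
      obtain ⟨ε, hε, H⟩ := hH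
      -- main estimate: for every δ > 0, F ε ≤ k * F (ε + δ)
      have key2 : ∀ δ > (0:ℝ), F ε ≤ k * F (ε + δ) := by
        intro δ hδ
        set η := min δ ε with hηdef
        have hη : 0 < η := lt_min hδ hε
        obtain ⟨N₁, hN₁⟩ := Metric.tendsto_atTop.1 hdtend (η/2) (by positivity)
        have hdlt : ∀ j ≥ N₁, d j < η / 2 := by
          intro j hj
          have := hN₁ j hj
          rw [Real.dist_eq, sub_zero, abs_of_nonneg (hd0 j)] at this
          exact this
        have hselflt : ∀ j ≥ N₁, σ (u j) (u j) < ε := by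
          intro j hj
          calc σ (u j) (u j) ≤ 2 * d j := hself _ _
            _ < 2 * (η/2) := by have := hdlt j hj; linarith
            _ = η := by ring
            _ ≤ ε := min_le_right _ _
        obtain ⟨n, m, hn, hm, hlt, hεσ⟩ :
            ∃ n m, N₁ + 1 ≤ n ∧ N₁ + 1 ≤ m ∧ n < m ∧ ε ≤ σ (u n) (u m) := by
          obtain ⟨n, hn, m, hm, hnm⟩ := H (N₁ + 1)
          rcases lt_trichotomy n m with h | h | h
          · exact ⟨n, m, hn, hm, h, hnm⟩
          · subst h
            exact absurd hnm (not_le.2 (hselflt n (by omega)))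
          · exact ⟨m, n, hm, hn, h, by rwa [hσ2]⟩
        have hPex : ∃ j, n < j ∧ ε ≤ σ (u n) (u j) := ⟨m, hlt, hεσ⟩
        obtain ⟨hm'1, hm'2⟩ := Nat.find_spec hPex
        set m' := Nat.find hPex with hm'def
        have hmin : ∀ j, n < j → j < m' → σ (u n) (u j) < ε := by
          intro j h1 h2
          have := Nat.find_min hPex h2
          push_neg at this
          exact lt_of_not_ge (fun hc => absurd (this h1) (not_lt.2 hc))
        have hm'ne : m' ≠ n + 1 := by
          intro hcon
          rw [hcon] at hm'2
          have h2 : d n < η / 2 := hdlt n (by omega)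
          have h3 : η ≤ ε := min_le_right δ ε
          have h4 : ε ≤ d n := hm'2
          linarith
        have hm'big : n + 1 < m' := by omega
        have hstep1 : σ (u n) (u (m'-1)) < ε := hmin (m'-1) (by omega) (by omega)
        have hm'succ : m' - 1 + 1 = m' := by omega
        have hstep2 : σ (u n) (u m') < ε + η / 2 := by
          have htri := hσ3 (u n) (u m') (u (m'-1))
          have hdm : σ (u (m'-1)) (u m') < η / 2 := by
            have := hdlt (m'-1) (by omega)
            rw [hddef] at this
            simpa [hm'succ] using this
          linarith
        have hstep3 : σ (u (n-1)) (u (m'-1)) < ε + η / 2 := by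
          have hnsucc : n - 1 + 1 = n := by omega
          have htri := hσ3 (u (n-1)) (u (m'-1)) (u n)
          have hdn : σ (u (n-1)) (u n) < η / 2 := by
            have := hdlt (n-1) (by omega)
            rw [hddef] at this
            simpa [hnsucc] using this
          linarith
        have hun : u n = f (u (n-1)) := by
          rw [← husucc (n-1), Nat.sub_add_cancel (by omega)]
        have hum : u m' = f (u (m'-1)) := by
          rw [← husucc (m'-1), Nat.sub_add_cancel (by omega)]
        calc F ε ≤ F (σ (u n) (u m')) := hFmono _ _ hm'2
          _ = F (σ (f (u (n-1))) (f (u (m'-1)))) := by rw [← hun, ← hum]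
          _ ≤ k * F (σ (u (n-1)) (u (m'-1))) := he _ _
          _ ≤ k * F (ε + δ) := by
              refine mul_le_mul_of_nonneg_left (hFmono _ _ ?_) hk0
              have : η / 2 ≤ δ := le_trans (by linarith) (min_le_left δ ε)
              linarith
      -- pass to the limit δ → 0
      have hseq : Filter.Tendsto (fun i : ℕ => ε + 1 / (i+1 : ℝ)) atTop (𝓝 ε) := by
        have := tendsto_one_div_add_atTop_nhds_zero_nat (𝕜 := ℝ)
        simpa using (tendsto_const_nhds (x := ε)).add this
      have hFc : Filter.Tendsto (fun i : ℕ => F (ε + 1 / (i+1 : ℝ))) atTop (𝓝 (F ε)) := by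
        refine hFcont ε (le_of_lt hε) _ (fun i => ?_) hseq
        positivity
      have hle : F ε ≤ k * F ε := by
        refine ge_of_tendsto (hFc.const_mul k) ?_
        filter_upwards with i
        exact key2 _ (by positivity)
      have : k * F ε < F ε := by
        have := hρpos ε hε
        nlinarith
      linarith
    refine Metric.tendsto_atTop.2 fun ε hε => ?_
    obtain ⟨N, hN⟩ := key ε hε
    refine ⟨(N, N), fun q hq => ?_⟩
    have h1 : N ≤ q.1 := hq.1
    have h2 : N ≤ q.2 := hq.2
    rw [Real.dist_eq, sub_zero, abs_of_nonneg (hσ0 _ _)]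
    exact hN q.1 h1 q.2 h2
  -- apply completeness
  obtain ⟨x, hxY, hx1, hx2⟩ := ha u huY ⟨0, hcauchy⟩
  have hσxx : σ x x = 0 := tendsto_nhds_unique hx1 hcauchy
  have hux : Filter.Tendsto (fun n => σ (u n) x) atTop (𝓝 0) := by
    have := hx2
    rw [ConvergesTo, hσxx] at this
    exact this
  -- x is a fixed point
  have hfix : f x = x := by
    have hxu : Filter.Tendsto (fun n => σ x (u n)) atTop (𝓝 0) := by
      simpa [hσ2] using hux
    have hFxu : Filter.Tendsto (fun n => F (σ x (u n))) atTop (𝓝 0) := by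
      have h := hFcont 0 le_rfl (fun n => σ x (u n)) (fun n => hσ0 _ _) hxu
      rwa [hF0] at h
    have hFf : Filter.Tendsto (fun n => F (σ (f x) (f (u n)))) atTop (𝓝 0) := by
      refine squeeze_zero (fun n => hFnn _) (fun n => he x (u n)) ?_
      simpa using hFxu.const_mul k
    have hσf : Filter.Tendsto (fun n => σ (f x) (f (u n))) atTop (𝓝 0) :=
      hsmall _ (fun n => hσ0 _ _) hFf
    have hsum : Filter.Tendsto
        (fun n => σ (f x) (f (u n)) + σ (u (n+1)) x) atTop (𝓝 0) := by
      have h2 : Filter.Tendsto (fun n => σ (u (n+1)) x) atTop (𝓝 0) :=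
        hux.comp (tendsto_add_atTop_nat 1)
      simpa using hσf.add h2
    have hle : σ (f x) x ≤ 0 := by
      refine ge_of_tendsto hsum ?_
      filter_upwards with n
      rw [husucc n]
      exact hσ3 (f x) x (f (u n))
    have : σ (f x) x = 0 := le_antisymm hle (hσ0 _ _)
    exact hσ1 _ _ this
  refine ⟨x, hfix, fun y hy => ?_⟩
  -- uniqueness
  have h1 : F (σ y x) ≤ k * F (σ y x) := by
    have := he y x
    rw [hy, hfix] at this
    exact this
  have h2 : σ y x = 0 := by
    by_contra hc
    have hpos : 0 < σ y x := lt_of_le_of_ne (hσ0 _ _) (Ne.symm hc)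
    have := hFpos _ hpos
    nlinarith
  exact hσ1 _ _ h2
end

section
/- Let (X, σ) be a metric-like space, R a binary relation on X that is f-closed for a self-map f : X → X, and suppose there exists k ∈ [0,1) with σ(fx, fy) ≤ k·σ(x, y) for all x, y ∈ X with (x, y) ∈ R. If p and q are fixed points of f and there exists a path z₀ = p, z₁, …, z_l = q in R^s (i.e., [z_i, z_{i+1}] ∈ R for each 0 ≤ i ≤ l−1), then p = q. -/
open Filter Topology MeasureTheory

/-- Uniqueness of fixed points joined by a path in `R^s` under a relational
contraction in a metric-like space. -/
theorem fixedPoint_unique_of_path {X : Type*} (σ : X → X → ℝ) (R : X → X → Prop)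
    (f : X → X) (hML : MetricLike σ)
    (hc : FClosed R f)
    (k : ℝ) (hk0 : 0 ≤ k) (hk1 : k < 1)
    (he : ∀ x y, R x y → σ (f x) (f y) ≤ k * σ x y)
    (p q : X) (hp : f p = p) (hq : f q = q)
    (hpath : PathIn R p q) :
    p = q := by
  obtain ⟨hnn, hsep, hsym, htri⟩ := hML
  obtain ⟨l, z, hl, hz0, hzl, hedge⟩ := hpath
  -- each edge contracts under iteration, in either orientation
  have hstep : ∀ x y, (R x y ∨ R y x) →
      σ (f x) (f y) ≤ k * σ x y ∧ (R (f x) (f y) ∨ R (f y) (f x)) := by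
    rintro x y (h | h)
    · exact ⟨he x y h, Or.inl (hc x y h)⟩
    · refine ⟨?_, Or.inr (hc y x h)⟩
      rw [hsym (f x) (f y), hsym x y]
      exact he y x h
  have hiter : ∀ n, ∀ i < l,
      σ (f^[n] (z i)) (f^[n] (z (i + 1))) ≤ k ^ n * σ (z i) (z (i + 1)) ∧
      (R (f^[n] (z i)) (f^[n] (z (i + 1))) ∨ R (f^[n] (z (i + 1))) (f^[n] (z i))) := by
    intro n
    induction n with
    | zero => intro i hi; simpa using hedge i hi
    | succ n ih =>
      intro i hi
      obtain ⟨hb, hr⟩ := ih i hi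
      obtain ⟨hb', hr'⟩ := hstep _ _ hr
      rw [Function.iterate_succ_apply', Function.iterate_succ_apply']
      refine ⟨hb'.trans ?_, hr'⟩
      calc k * σ (f^[n] (z i)) (f^[n] (z (i + 1))) ≤ k * (k ^ n * σ (z i) (z (i + 1))) :=
            mul_le_mul_of_nonneg_left hb hk0
        _ = k ^ (n + 1) * σ (z i) (z (i + 1)) := by ring
  set C : ℝ := ∑ i ∈ Finset.range l, σ (z i) (z (i + 1)) with hC
  have hCnn : 0 ≤ C := Finset.sum_nonneg fun i _ => hnn _ _
  -- chain triangle inequality along the path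
  have hchain : ∀ n, ∀ m : ℕ, σ (f^[n] (z 0)) (f^[n] (z (m + 1))) ≤
      2 * ∑ i ∈ Finset.range (m + 1), σ (f^[n] (z i)) (f^[n] (z (i + 1))) := by
    intro n m
    induction m with
    | zero => simp; linarith [hnn (f^[n] (z 0)) (f^[n] (z 1))]
    | succ m ih =>
      calc σ (f^[n] (z 0)) (f^[n] (z (m + 1 + 1)))
          ≤ σ (f^[n] (z 0)) (f^[n] (z (m + 1))) + σ (f^[n] (z (m + 1))) (f^[n] (z (m + 1 + 1))) :=
            htri _ _ _
        _ ≤ 2 * ∑ i ∈ Finset.range (m + 1 + 1), σ (f^[n] (z i)) (f^[n] (z (i + 1))) := by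
            rw [Finset.sum_range_succ]
            linarith [hnn (f^[n] (z (m + 1))) (f^[n] (z (m + 1 + 1)))]
  have hfp : ∀ n, f^[n] p = p := fun n => Function.iterate_fixed hp n
  have hfq : ∀ n, f^[n] q = q := fun n => Function.iterate_fixed hq n
  have hbound : ∀ n, σ p q ≤ 2 * (k ^ n * C) := by
    intro n
    obtain ⟨m, rfl⟩ := Nat.exists_eq_succ_of_ne_zero hl.ne'
    have h1 := hchain n m
    rw [hz0, show m + 1 = m.succ from rfl, hzl, hfp, hfq] at h1
    have hsum : ∑ i ∈ Finset.range (m + 1), σ (f^[n] (z i)) (f^[n] (z (i + 1))) ≤ k ^ n * C := by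
      rw [hC, Finset.mul_sum]
      exact Finset.sum_le_sum fun i hi => (hiter n i (Finset.mem_range.mp hi)).1
    linarith
  -- conclude: σ p q = 0
  have hzero : σ p q = 0 := by
    by_contra h
    have hpos : 0 < σ p q := lt_of_le_of_ne (hnn p q) (Ne.symm h)
    have htend : Tendsto (fun n => 2 * (k ^ n * C)) atTop (𝓝 (2 * (0 * C))) := by
      exact ((tendsto_pow_atTop_nhds_zero_of_lt_one hk0 hk1).mul_const C).const_mul 2
    rw [zero_mul, mul_zero] at htend
    have hle : σ p q ≤ 0 := ge_of_tendsto' htend hbound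
    linarith
  exact hsep p q hzero
end

section
/- Let (X, p) be a partial metric space and f : X → X. Suppose there exists Y with f(X) ⊆ Y ⊆ X such that (Y, p) is complete (every Cauchy sequence in Y has a limit y ∈ Y with lim_{n,m→∞} p(x_n, x_m) = p(y,y) = lim_{n→∞} p(x_n, y)), and there exists k ∈ [0,1) such that p(fx, fy) ≤ k·p(x, y) for all x, y ∈ X. Then f has a unique fixed point. -/
open Filter Topology MeasureTheory

/-- A partial metric on `X`. -/
def PartialMetricOn {X : Type*} (p : X → X → ℝ) : Prop :=
  (∀ x y, 0 ≤ p x y) ∧ (∀ x y, x = y ↔ (p x x = p x y ∧ p x y = p y y)) ∧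
    (∀ x y, p x x ≤ p x y) ∧ (∀ x y, p x y = p y x) ∧
    (∀ x y z, p x y ≤ p x z + p z y - p z z)

/-- Banach contraction principle in partial metric spaces, with completeness
required only on a subset `Y ⊇ f(X)`. -/
theorem banach_partialMetric {X : Type*} [Nonempty X] (p : X → X → ℝ) (f : X → X)
    (hPM : PartialMetricOn p)
    (Y : Set X) (hfY : Set.range f ⊆ Y) (ha : CompleteOn p Y)
    (k : ℝ) (hk0 : 0 ≤ k) (hk1 : k < 1)
    (he : ∀ x y, p (f x) (f y) ≤ k * p x y) :
    ∃! x, f x = x := by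
  obtain ⟨hpos, hsep, hsmall, hsymm, htri⟩ := hPM
  have htri' : ∀ x y z, p x y ≤ p x z + p z y := fun x y z =>
    (htri x y z).trans (by linarith [hpos z z])
  obtain ⟨x0⟩ := ‹Nonempty X›
  set u : ℕ → X := fun n => f^[n] (f x0) with hu
  have husucc : ∀ n, u (n + 1) = f (u n) := fun n => Function.iterate_succ_apply' f n (f x0)
  have huY : ∀ n, u n ∈ Y := by
    intro n
    cases n with
    | zero => exact hfY ⟨x0, rfl⟩
    | succ n => rw [husucc]; exact hfY ⟨u n, rfl⟩
  have h1k : 0 < 1 - k := by linarith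
  set C : ℝ := p (u 0) (u 1) with hCdef
  have hC : 0 ≤ C := hpos _ _
  set B : ℝ := C / (1 - k) with hBdef
  have hCB : C + k * B = B := by rw [hBdef]; field_simp; ring
  have hCleB : C ≤ B := by
    rw [hBdef, le_div_iff₀ h1k]; nlinarith
  have hB0 : 0 ≤ B := hC.trans hCleB
  have hstep : ∀ n, p (u n) (u (n + 1)) ≤ k ^ n * C := by
    intro n
    induction n with
    | zero => simp [hCdef]
    | succ n ih =>
      have h2 : p (u (n + 1)) (u (n + 2)) ≤ k * p (u n) (u (n + 1)) := by
        have h := he (u n) (u (n + 1))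
        rw [← husucc n, ← husucc (n + 1)] at h
        exact h
      calc p (u (n + 1)) (u (n + 2)) ≤ k * p (u n) (u (n + 1)) := h2
        _ ≤ k * (k ^ n * C) := by
            exact mul_le_mul_of_nonneg_left ih hk0
        _ = k ^ (n + 1) * C := by ring
  have hbound : ∀ n j, p (u n) (u (n + j)) ≤ k ^ n * B := by
    intro n j
    induction j generalizing n with
    | zero =>
      calc p (u n) (u n) ≤ p (u n) (u (n + 1)) := hsmall _ _
        _ ≤ k ^ n * C := hstep n
        _ ≤ k ^ n * B := mul_le_mul_of_nonneg_left hCleB (pow_nonneg hk0 n)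
    | succ j ih =>
      have step : p (u n) (u (n + (j + 1))) ≤ p (u n) (u (n + 1)) + p (u (n + 1)) (u (n + 1 + j)) := by
        have : n + (j + 1) = n + 1 + j := by ring
        rw [this]; exact htri' _ _ _
      have ih' : p (u (n + 1)) (u (n + 1 + j)) ≤ k ^ (n + 1) * B := ih (n + 1)
      calc p (u n) (u (n + (j + 1))) ≤ p (u n) (u (n + 1)) + p (u (n + 1)) (u (n + 1 + j)) := step
        _ ≤ k ^ n * C + k ^ (n + 1) * B := add_le_add (hstep n) ih'
        _ = k ^ n * (C + k * B) := by ring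
        _ = k ^ n * B := by rw [hCB]
  have hgen : ∀ n m, p (u n) (u m) ≤ k ^ (min n m) * B := by
    intro n m
    rcases le_total n m with h | h
    · obtain ⟨j, rfl⟩ := Nat.exists_eq_add_of_le h
      simpa [Nat.min_eq_left h] using hbound n j
    · obtain ⟨j, rfl⟩ := Nat.exists_eq_add_of_le h
      rw [hsymm]
      simpa [Nat.min_eq_right h] using hbound m j
  have hk : Tendsto (fun n : ℕ => k ^ n) atTop (𝓝 0) :=
    tendsto_pow_atTop_nhds_zero_of_lt_one hk0 hk1
  have hmin : Tendsto (fun q : ℕ × ℕ => min q.1 q.2) atTop atTop := by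
    rw [tendsto_atTop]
    intro b
    rw [eventually_atTop]
    exact ⟨(b, b), fun q hq => le_min hq.1 hq.2⟩
  have hg : Tendsto (fun q : ℕ × ℕ => k ^ (min q.1 q.2) * B) atTop (𝓝 0) := by
    simpa using (hk.comp hmin).mul_const B
  have h0 : Tendsto (fun q : ℕ × ℕ => p (u q.1) (u q.2)) atTop (𝓝 0) :=
    squeeze_zero (fun q => hpos _ _) (fun q => hgen q.1 q.2) hg
  obtain ⟨x, hxY, hlim, hconv⟩ := ha u huY ⟨0, h0⟩
  have pxx0 : p x x = 0 := tendsto_nhds_unique hlim h0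
  have hconv' : Tendsto (fun n => p (u n) x) atTop (𝓝 0) := by
    have h := hconv
    unfold ConvergesTo at h
    rwa [pxx0] at h
  have hfix : f x = x := by
    have hlim2 : Tendsto (fun n => k * p (u n) x + p (u (n + 1)) x) atTop (𝓝 0) := by
      have := (hconv'.const_mul k).add (hconv'.comp (tendsto_add_atTop_nat 1))
      simpa using this
    have hle : ∀ n, p (f x) x ≤ k * p (u n) x + p (u (n + 1)) x := by
      intro n
      have h1 : p (f x) (u (n + 1)) ≤ k * p (u n) x := by
        rw [husucc n]
        calc p (f x) (f (u n)) ≤ k * p x (u n) := he _ _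
          _ = k * p (u n) x := by rw [hsymm]
      calc p (f x) x ≤ p (f x) (u (n + 1)) + p (u (n + 1)) x := htri' _ _ _
        _ ≤ k * p (u n) x + p (u (n + 1)) x := by linarith
    have hle0 : p (f x) x ≤ 0 := ge_of_tendsto' hlim2 hle
    have hpfx : p (f x) x = 0 := le_antisymm hle0 (hpos _ _)
    have hpff : p (f x) (f x) = 0 :=
      le_antisymm (by linarith [hsmall (f x) x]) (hpos _ _)
    exact (hsep (f x) x).2 ⟨by rw [hpff, hpfx], by rw [hpfx, pxx0]⟩
  refine ⟨x, hfix, fun y hy => ?_⟩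
  have h1 : p y x ≤ k * p y x := by
    have := he y x
    rw [hy, hfix] at this
    exact this
  have h2 : p y x = 0 := by nlinarith [hpos y x]
  have h3 : p y y = 0 := le_antisymm (by linarith [hsmall y x]) (hpos _ _)
  exact (hsep y x).2 ⟨by rw [h3, h2], by rw [h2, pxx0]⟩
end

section
/- Let (X, d) be a metric space, R a binary relation on X, and f : X → X. Assume: (a) every R-preserving Cauchy sequence in X converges in X; (b) there exists x₀ ∈ X with (x₀, f x₀) ∈ R; (c) R is f-closed; (d) either f is R-continuous (for every R-preserving sequence (x_n) converging to x, (f x_n) converges to f x) or R is d-self-closed (for every R-preserving sequence (x_n) converging to x there is a subsequence (x_{n_k}) with [x_{n_k}, x] ∈ R for all k); (e) there exists k ∈ [0,1) such that d(fx, fy) ≤ k·d(x, y) for all x, y ∈ X with (x, y) ∈ R. Then f has a fixed point. If moreover (f) for each pair x, y ∈ X there exists a path from fx to fy in R^s, then the fixed point is unique. -/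
open Filter Topology

/-- Relation-theoretic contraction principle in metric spaces. -/
theorem uniqueFixedPoint_metric {X : Type*} [MetricSpace X] (R : X → X → Prop)
    (f : X → X)
    (ha : ∀ u : ℕ → X, RPreserving R u → CauchySeq u → ∃ x, Tendsto u atTop (𝓝 x))
    (x₀ : X) (hb : R x₀ (f x₀))
    (hc : FClosed R f)
    (hd : (∀ (u : ℕ → X) (x : X), RPreserving R u → Tendsto u atTop (𝓝 x) →
            Tendsto (fun n => f (u n)) atTop (𝓝 (f x))) ∨
          (∀ (u : ℕ → X) (x : X), RPreserving R u → Tendsto u atTop (𝓝 x) →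
            ∃ φ : ℕ → ℕ, StrictMono φ ∧ ∀ k, R (u (φ k)) x ∨ R x (u (φ k))))
    (k : ℝ) (hk0 : 0 ≤ k) (hk1 : k < 1)
    (he : ∀ x y, R x y → dist (f x) (f y) ≤ k * dist x y) :
    (∃ x, f x = x) ∧ ((∀ x y, PathIn R (f x) (f y)) → ∃! x, f x = x) := by
  classical
  set u : ℕ → X := fun n => f^[n] x₀ with hu
  have hR : RPreserving R u := by
    intro n
    induction n with
    | zero => simpa [u] using hb
    | succ m ih =>
      have := hc _ _ ih
      simpa [u, Function.iterate_succ_apply'] using this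
  have hstep : ∀ n, dist (u n) (u (n + 1)) ≤ dist x₀ (f x₀) * k ^ n := by
    intro n
    induction n with
    | zero => simp [u]
    | succ m ih =>
      have h1 : dist (u (m + 1)) (u (m + 2)) ≤ k * dist (u m) (u (m + 1)) := by
        have := he _ _ (hR m)
        simpa [u, Function.iterate_succ_apply'] using this
      calc dist (u (m + 1)) (u (m + 2)) ≤ k * dist (u m) (u (m + 1)) := h1
        _ ≤ k * (dist x₀ (f x₀) * k ^ m) := by
            exact mul_le_mul_of_nonneg_left ih hk0
        _ = dist x₀ (f x₀) * k ^ (m + 1) := by ring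
  have hcauchy : CauchySeq u := cauchySeq_of_le_geometric k _ hk1 hstep
  obtain ⟨x, hx⟩ := ha u hR hcauchy
  have hshift : Tendsto (fun n => u (n + 1)) atTop (𝓝 x) :=
    hx.comp (tendsto_add_atTop_nat 1)
  have hfu : ∀ n, f (u n) = u (n + 1) := by
    intro n; simp [u, Function.iterate_succ_apply']
  have hfix : f x = x := by
    rcases hd with hcont | hsc
    · have h1 : Tendsto (fun n => f (u n)) atTop (𝓝 (f x)) := hcont u x hR hx
      have h2 : Tendsto (fun n => f (u n)) atTop (𝓝 x) := by
        simpa [hfu] using hshift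
      exact tendsto_nhds_unique h1 h2
    · obtain ⟨φ, hφ, hrel⟩ := hsc u x hR hx
      have h1 : Tendsto (fun j => f (u (φ j))) atTop (𝓝 x) := by
        have : Tendsto (fun j => u (φ j + 1)) atTop (𝓝 x) := by
          refine hshift.comp ?_
          exact hφ.tendsto_atTop
        simpa [hfu] using this
      have h2 : Tendsto (fun j => f (u (φ j))) atTop (𝓝 (f x)) := by
        rw [tendsto_iff_dist_tendsto_zero]
        have hb2 : ∀ j, dist (f (u (φ j))) (f x) ≤ k * dist (u (φ j)) x := by
          intro j
          rcases hrel j with h | h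
          · exact he _ _ h
          · rw [dist_comm]
            simpa [dist_comm] using he _ _ h
        have hdz : Tendsto (fun j => k * dist (u (φ j)) x) atTop (𝓝 0) := by
          have : Tendsto (fun j => dist (u (φ j)) x) atTop (𝓝 0) := by
            rw [← tendsto_iff_dist_tendsto_zero]
            exact hx.comp hφ.tendsto_atTop
          simpa using this.const_mul k
        exact squeeze_zero (fun j => dist_nonneg) hb2 hdz
      exact tendsto_nhds_unique h2 h1
  refine ⟨⟨x, hfix⟩, ?_⟩
  intro hpath
  refine ⟨x, hfix, ?_⟩
  intro y hy
  -- path from f y = y to f x = x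
  obtain ⟨l, z, hl, hz0, hzl, hrel⟩ := hpath y x
  rw [hy] at hz0
  rw [hfix] at hzl
  have hedge : ∀ n i, i < l →
      (R (f^[n] (z i)) (f^[n] (z (i + 1))) ∨ R (f^[n] (z (i + 1))) (f^[n] (z i))) ∧
      dist (f^[n] (z i)) (f^[n] (z (i + 1))) ≤ k ^ n * dist (z i) (z (i + 1)) := by
    intro n
    induction n with
    | zero => intro i hi; exact ⟨hrel i hi, by simp⟩
    | succ m ih =>
      intro i hi
      obtain ⟨hr, hd2⟩ := ih i hi
      constructor
      · rcases hr with h | h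
        · left; simpa [Function.iterate_succ_apply'] using hc _ _ h
        · right; simpa [Function.iterate_succ_apply'] using hc _ _ h
      · have hcontr : dist (f^[m + 1] (z i)) (f^[m + 1] (z (i + 1))) ≤
            k * dist (f^[m] (z i)) (f^[m] (z (i + 1))) := by
          rcases hr with h | h
          · simpa [Function.iterate_succ_apply'] using he _ _ h
          · rw [Function.iterate_succ_apply', Function.iterate_succ_apply', dist_comm]
            simpa [dist_comm] using he _ _ h
        calc dist (f^[m + 1] (z i)) (f^[m + 1] (z (i + 1)))
            ≤ k * dist (f^[m] (z i)) (f^[m] (z (i + 1))) := hcontr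
          _ ≤ k * (k ^ m * dist (z i) (z (i + 1))) :=
              mul_le_mul_of_nonneg_left hd2 hk0
          _ = k ^ (m + 1) * dist (z i) (z (i + 1)) := by ring
  set S : ℝ := ∑ i ∈ Finset.range l, dist (z i) (z (i + 1)) with hS
  have hbound : ∀ n, dist y x ≤ k ^ n * S := by
    intro n
    have h0 : f^[n] (z 0) = y := by rw [hz0]; exact Function.iterate_fixed hy n
    have h1 : f^[n] (z l) = x := by rw [hzl]; exact Function.iterate_fixed hfix n
    calc dist y x = dist (f^[n] (z 0)) (f^[n] (z l)) := by rw [h0, h1]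
      _ ≤ ∑ i ∈ Finset.range l, dist (f^[n] (z i)) (f^[n] (z (i + 1))) :=
          dist_le_range_sum_dist (fun i => f^[n] (z i)) l
      _ ≤ ∑ i ∈ Finset.range l, k ^ n * dist (z i) (z (i + 1)) := by
          refine Finset.sum_le_sum ?_
          intro i hi
          exact (hedge n i (Finset.mem_range.mp hi)).2
      _ = k ^ n * S := by rw [hS, Finset.mul_sum]
  have hlim : Tendsto (fun n => k ^ n * S) atTop (𝓝 0) := by
    have := tendsto_pow_atTop_nhds_zero_of_lt_one hk0 hk1
    simpa using this.mul_const S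
  have : dist y x ≤ 0 := le_of_tendsto_of_tendsto' tendsto_const_nhds hlim hbound
  have : dist y x = 0 := le_antisymm this dist_nonneg
  exact dist_eq_zero.mp this
end
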